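/- Certification lemma: let Δ, r ∈ Mat_n(ℝG) with r *-invariant, λ ∈ ℝ, and suppose Δ - λ I_n = S + r where S ∈ Σ²Mat_n(ℝG). Then Δ - (λ - ‖r‖₁) I_n ∈ Σ²Mat_n(ℝG). -/

import Mathlib

/-- The group-ring involution on `ℝG` determined by `g ↦ g⁻¹`. -/
noncomputable def gstar {G : Type*} [Group G] (x : MonoidAlgebra ℝ G) : MonoidAlgebra ℝ G :=
  MonoidAlgebra.ofCoeff (Finsupp.equivMapDomain (Equiv.inv G) x.coeff)

section GroupRingStar
variable {G : Type*} [Group G]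

lemma gstar_single (g : G) (a : ℝ) :
    gstar (MonoidAlgebra.single g a) = MonoidAlgebra.single g⁻¹ a := by
  simp [gstar, Finsupp.equivMapDomain_single]

lemma gstar_add (x y : MonoidAlgebra ℝ G) : gstar (x + y) = gstar x + gstar y :=
  MonoidAlgebra.coeff_injective (map_add (Finsupp.domCongr (M := ℝ) (Equiv.inv G)) x.coeff y.coeff)

lemma gstar_zero : gstar (0 : MonoidAlgebra ℝ G) = 0 := by ext g; simp [gstar]

lemma gstar_gstar (x : MonoidAlgebra ℝ G) : gstar (gstar x) = x := by
  ext g; simp [gstar]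

lemma gstar_mul (x y : MonoidAlgebra ℝ G) : gstar (x * y) = gstar y * gstar x := by
  induction x using MonoidAlgebra.induction_linear with
  | zero => simp [gstar_zero]
  | add f g hf hg => rw [add_mul, gstar_add, hf, hg, gstar_add, mul_add]
  | single g a =>
    induction y using MonoidAlgebra.induction_linear with
    | zero => simp [gstar_zero]
    | add f g' hf hg => rw [mul_add, gstar_add, hf, hg, gstar_add, add_mul]
    | single h b =>
      rw [MonoidAlgebra.single_mul_single, gstar_single, gstar_single, gstar_single,
        MonoidAlgebra.single_mul_single, mul_inv_rev, mul_comm]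

/-- `ℝG` as a `*`-ring, with `star` induced by `g ↦ g⁻¹`. -/
noncomputable instance groupRingStar : StarRing (MonoidAlgebra ℝ G) where
  star := gstar
  star_involutive := gstar_gstar
  star_add := gstar_add
  star_mul := gstar_mul

lemma star_of (g : G) : star (MonoidAlgebra.of ℝ G g) = MonoidAlgebra.of ℝ G g⁻¹ := by
  show gstar _ = _
  simp [MonoidAlgebra.of_apply, gstar_single]

end GroupRingStar

/-- The `ℓ¹`-norm of an element of the group ring `ℝG`. -/
noncomputable def l1Norm {G : Type*} [Group G] (x : MonoidAlgebra ℝ G) : ℝ :=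
  ∑ g ∈ x.coeff.support, |x.coeff g|

/-- The `ℓ¹`-norm of a matrix over the group ring: the sum of the norms of entries. -/
noncomputable def matL1Norm {G : Type*} [Group G] {n : ℕ}
    (M : Matrix (Fin n) (Fin n) (MonoidAlgebra ℝ G)) : ℝ :=
  ∑ i, ∑ j, l1Norm (M i j)

/-- A matrix over `ℝG` is a sum of hermitian squares, i.e. lies in `Σ²Matₙ(ℝG)`. -/
def IsMatSOS {G : Type*} [Group G] {n : ℕ}
    (M : Matrix (Fin n) (Fin n) (MonoidAlgebra ℝ G)) : Prop :=
  ∃ (k : ℕ) (A : Fin k → Matrix (Fin n) (Fin n) (MonoidAlgebra ℝ G)),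
    M = ∑ i, star (A i) * A i




section Helpers
variable {G : Type*} [Group G] {n : ℕ}

open MonoidAlgebra

lemma star_single (g : G) (a : ℝ) :
    star (MonoidAlgebra.single g a) = MonoidAlgebra.single g⁻¹ a := gstar_single g a

lemma gstar_sum_single (s : Finset G) (f : G → ℝ) :
    gstar (∑ g ∈ s, MonoidAlgebra.single g (f g)) = ∑ g ∈ s, MonoidAlgebra.single g⁻¹ (f g) := by
  classical
  induction s using Finset.induction with
  | empty => simpa using gstar_zero
  | insert _ _ hx ih => rw [Finset.sum_insert hx, Finset.sum_insert hx, gstar_add, gstar_single, ih]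

lemma l1Norm_nonneg (x : MonoidAlgebra ℝ G) : 0 ≤ l1Norm x :=
  Finset.sum_nonneg fun _ _ => abs_nonneg _

lemma sos_zero : IsMatSOS (0 : Matrix (Fin n) (Fin n) (MonoidAlgebra ℝ G)) :=
  ⟨0, finZeroElim, by simp⟩

lemma sos_add {M N : Matrix (Fin n) (Fin n) (MonoidAlgebra ℝ G)}
    (hM : IsMatSOS M) (hN : IsMatSOS N) : IsMatSOS (M + N) := by
  obtain ⟨k, A, rfl⟩ := hM
  obtain ⟨l, B, rfl⟩ := hN
  refine ⟨k + l, Fin.append A B, ?_⟩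
  rw [Fin.sum_univ_add]
  simp [Fin.append_left, Fin.append_right]

lemma sos_sum {ι : Type*} (s : Finset ι) (f : ι → Matrix (Fin n) (Fin n) (MonoidAlgebra ℝ G))
    (hf : ∀ i ∈ s, IsMatSOS (f i)) : IsMatSOS (∑ i ∈ s, f i) := by
  classical
  induction s using Finset.induction with
  | empty => simpa using sos_zero
  | insert _ _ hx ih =>
    rw [Finset.sum_insert hx]
    exact sos_add (hf _ (Finset.mem_insert_self _ _))
      (ih fun i hi => hf i (Finset.mem_insert_of_mem hi))

lemma sos_of_vec (v : Fin n → MonoidAlgebra ℝ G) :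
    IsMatSOS (Matrix.of fun p q => star (v p) * v q) := by
  refine ⟨1, fun _ => Matrix.of fun p q => if (p : ℕ) = 0 then v q else 0, ?_⟩
  ext p q
  simp only [Finset.sum_apply, Matrix.mul_apply, Matrix.star_apply, Matrix.of_apply,
    Fin.sum_univ_one]
  rw [Finset.sum_eq_single (⟨0, p.pos⟩ : Fin n)]
  · simp
  · intro b _ hb
    have : (b : ℕ) ≠ 0 := fun h => hb (Fin.ext h)
    simp [this]
  · simp


lemma vvec_entry_core (i j : Fin n) (g : G) (a s t : ℝ)
    (hs : s * s = |a| / 2) (ht : t * t = |a| / 2) (hst : s * t = a / 2) (p q : Fin n) :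
    star ((if p = i then MonoidAlgebra.single (1 : G) s else 0)
        + (if p = j then MonoidAlgebra.single g t else 0))
      * ((if q = i then MonoidAlgebra.single (1 : G) s else 0)
        + (if q = j then MonoidAlgebra.single g t else 0)) =
      (if p = i ∧ q = i then MonoidAlgebra.single (1 : G) (|a| / 2) else 0)
      + (if p = i ∧ q = j then MonoidAlgebra.single g (a / 2) else 0)
      + (if p = j ∧ q = i then MonoidAlgebra.single g⁻¹ (a / 2) else 0)
      + (if p = j ∧ q = j then MonoidAlgebra.single (1 : G) (|a| / 2) else 0) := by
  have hts : t * s = a / 2 := by rw [mul_comm]; exact hst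
  simp only [star_add, apply_ite (star : MonoidAlgebra ℝ G → MonoidAlgebra ℝ G),
    star_single, star_zero, add_mul, mul_add, ite_mul, mul_ite, zero_mul, mul_zero,
    MonoidAlgebra.single_mul_single, ite_and, one_mul, mul_one, inv_mul_cancel, inv_one,
    hs, ht, hst, hts]
  split_ifs <;> abel

/-- The vector generating the hermitian square certificate for the single term
`a·g` at entry `(i,j)`. -/
noncomputable def vvec (i j : Fin n) (g : G) (a : ℝ) : Fin n → MonoidAlgebra ℝ G := fun q =>
  (if q = i then MonoidAlgebra.single (1 : G) (Real.sqrt (|a| / 2)) else 0)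
  + (if q = j then MonoidAlgebra.single g
      (if 0 ≤ a then Real.sqrt (|a| / 2) else -Real.sqrt (|a| / 2)) else 0)

lemma vvec_entry (i j : Fin n) (g : G) (a : ℝ) (p q : Fin n) :
    star (vvec i j g a p) * vvec i j g a q =
      (if p = i ∧ q = i then MonoidAlgebra.single (1 : G) (|a| / 2) else 0)
      + (if p = i ∧ q = j then MonoidAlgebra.single g (a / 2) else 0)
      + (if p = j ∧ q = i then MonoidAlgebra.single g⁻¹ (a / 2) else 0)
      + (if p = j ∧ q = j then MonoidAlgebra.single (1 : G) (|a| / 2) else 0) := by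
  have hs : Real.sqrt (|a| / 2) * Real.sqrt (|a| / 2) = |a| / 2 :=
    Real.mul_self_sqrt (by positivity)
  refine vvec_entry_core i j g a _ _ hs ?_ ?_ p q
  · split_ifs
    · exact hs
    · simpa using hs
  · split_ifs with h
    · rw [hs, abs_of_nonneg h]
    · rw [mul_neg, hs, abs_of_neg (lt_of_not_ge h)]; ring


lemma single_sum {ι : Type*} (s : Finset ι) (f : ι → ℝ) (g : G) :
    MonoidAlgebra.single g (∑ x ∈ s, f x) = ∑ x ∈ s, MonoidAlgebra.single g (f x) :=
  map_sum (MonoidAlgebra.singleAddHom g) f s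

lemma gstar_smul (c : ℝ) (x : MonoidAlgebra ℝ G) : gstar (c • x) = c • gstar x := by
  ext g; simp [gstar]

lemma half_sum_single (x : MonoidAlgebra ℝ G) :
    ∑ g ∈ x.coeff.support, MonoidAlgebra.single g (x.coeff g / 2) = (2 : ℝ)⁻¹ • x := by
  conv_rhs => rw [← MonoidAlgebra.sum_coeff_single x, Finsupp.sum]
  rw [Finset.smul_sum]
  refine Finset.sum_congr rfl fun g _ => ?_
  rw [MonoidAlgebra.smul_single, smul_eq_mul]
  congr 1
  ring

lemma half_sum_single_inv (x : MonoidAlgebra ℝ G) :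
    ∑ g ∈ x.coeff.support, MonoidAlgebra.single g⁻¹ (x.coeff g / 2) = (2 : ℝ)⁻¹ • gstar x := by
  rw [← gstar_sum_single, half_sum_single, gstar_smul]

/-- The key order-unit fact: `r + ‖r‖₁ • 1` is a sum of hermitian squares whenever
`r` is `*`-invariant. -/
lemma sos_order_unit (r : Matrix (Fin n) (Fin n) (MonoidAlgebra ℝ G)) (hr : star r = r) :
    IsMatSOS (r + matL1Norm r • 1) := by
  classical
  set row : Fin n → ℝ := fun p => ∑ j, l1Norm (r p j) with hrow
  set col : Fin n → ℝ := fun p => ∑ i, l1Norm (r i p) with hcol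
  set c : Fin n → ℝ := fun p => matL1Norm r - (row p + col p) / 2 with hcdef
  have hc : ∀ p, 0 ≤ c p := by
    intro p
    have h1 : row p ≤ matL1Norm r := by
      refine Finset.single_le_sum (f := fun i => ∑ j, l1Norm (r i j))
        (fun i _ => Finset.sum_nonneg fun j _ => l1Norm_nonneg _) (Finset.mem_univ p)
    have h2 : col p ≤ matL1Norm r := by
      refine le_trans ?_ (le_of_eq rfl : (∑ i, ∑ j, l1Norm (r i j)) ≤ matL1Norm r)
      exact Finset.sum_le_sum fun i _ =>
        Finset.single_le_sum (f := fun j => l1Norm (r i j))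
          (fun j _ => l1Norm_nonneg _) (Finset.mem_univ p)
    simp only [hcdef]
    linarith
  have key : r + matL1Norm r • 1 =
      (∑ i, ∑ j, ∑ g ∈ (r i j).coeff.support,
        Matrix.of fun p q => star (vvec i j g ((r i j).coeff g) p) * vvec i j g ((r i j).coeff g) q)
      + ∑ p₀, Matrix.of (fun p q =>
          star ((fun q' => if q' = p₀ then MonoidAlgebra.single (1 : G) (Real.sqrt (c p₀))
            else 0) p)
          * (fun q' => if q' = p₀ then MonoidAlgebra.single (1 : G) (Real.sqrt (c p₀))
            else 0) q) := by
    refine Matrix.ext fun p q => ?_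
    have hdiag : ∀ p₀ : Fin n,
        star (if p = p₀ then MonoidAlgebra.single (1 : G) (Real.sqrt (c p₀)) else 0)
          * (if q = p₀ then MonoidAlgebra.single (1 : G) (Real.sqrt (c p₀)) else 0)
        = if p = p₀ ∧ q = p₀ then MonoidAlgebra.single (1 : G) (c p₀) else 0 := by
      intro p₀
      rw [apply_ite (star : MonoidAlgebra ℝ G → MonoidAlgebra ℝ G), star_single, star_zero]
      rw [ite_and]
      split_ifs <;>
        simp [MonoidAlgebra.single_mul_single, Real.mul_self_sqrt (hc p₀)]
    simp only [Matrix.add_apply, Matrix.sum_apply, Matrix.of_apply, vvec_entry, hdiag,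
      Matrix.smul_apply, Matrix.one_apply, smul_ite, smul_zero,
      Finset.sum_add_distrib, Finset.sum_ite_irrel, Finset.sum_const_zero, ite_and,
      Finset.sum_ite_eq, Finset.mem_univ, if_true]
    rw [half_sum_single, half_sum_single_inv]
    have hst : ∀ a b : Fin n, gstar (r a b) = r b a := by
      intro a b
      have h := congrFun (congrFun hr b) a
      rw [Matrix.star_apply] at h
      exact h
    rw [hst]
    by_cases hqp : q = p
    · subst hqp
      simp only [if_pos rfl]
      simp only [← single_sum]
      have hrowp : ∑ x : Fin n, ∑ x_1 ∈ (r q x).coeff.support, |(r q x).coeff x_1| / 2 = row q / 2 := by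
        simp [hrow, l1Norm, Finset.sum_div]
      have hcolp : ∑ x : Fin n, ∑ x_1 ∈ (r x q).coeff.support, |(r x q).coeff x_1| / 2 = col q / 2 := by
        simp [hcol, l1Norm, Finset.sum_div]
      rw [hrowp, hcolp]
      simp only [if_true]
      have hN : matL1Norm r = row q / 2 + (col q / 2 + c q) := by simp [hcdef]; ring
      have h1 : (matL1Norm r • (1 : MonoidAlgebra ℝ G)) =
          MonoidAlgebra.single 1 (row q / 2) + (MonoidAlgebra.single 1 (col q / 2)
            + MonoidAlgebra.single 1 (c q)) := by
        rw [MonoidAlgebra.one_def, MonoidAlgebra.smul_single, smul_eq_mul, mul_one, hN,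
          MonoidAlgebra.single_add, MonoidAlgebra.single_add]
      rw [h1]
      module
    · have hpq : ¬ p = q := fun h => hqp h.symm
      simp only [if_neg hqp, if_neg hpq]
      module
  rw [key]
  refine sos_add ?_ ?_
  · exact sos_sum _ _ fun i _ => sos_sum _ _ fun j _ => sos_sum _ _ fun g _ => sos_of_vec _
  · exact sos_sum _ _ fun p₀ _ => sos_of_vec _

end Helpers


/-- certification lemma: if `Δ - λIₙ = S + r` with `S` a sum of
hermitian squares and `r` `*`-invariant, then `Δ - (λ - ‖r‖₁)Iₙ` is a sum of
hermitian squares. -/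
theorem statement18 {G : Type*} [Group G] {n : ℕ}
    (Δ r S : Matrix (Fin n) (Fin n) (MonoidAlgebra ℝ G))
    (hr : star r = r) (lam : ℝ) (hS : IsMatSOS S)
    (h : Δ - lam • (1 : Matrix (Fin n) (Fin n) (MonoidAlgebra ℝ G)) = S + r) :
    IsMatSOS (Δ - (lam - matL1Norm r) • (1 : Matrix (Fin n) (Fin n) (MonoidAlgebra ℝ G))) := by
  have key : Δ - (lam - matL1Norm r) • (1 : Matrix (Fin n) (Fin n) (MonoidAlgebra ℝ G))
      = S + (r + matL1Norm r • 1) := by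
    rw [sub_smul]
    rw [show Δ - (lam • (1 : Matrix (Fin n) (Fin n) (MonoidAlgebra ℝ G))
        - matL1Norm r • 1) = (Δ - lam • 1) + matL1Norm r • 1 by abel]
    rw [h, add_assoc]
  rw [key]
  exact sos_add hS (sos_order_unit r hr)
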